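/- For every Markov decision process with finite state and action spaces and a reachability objective ◇T, there exists a pure memoryless strategy π* such that Pr^{π*}(◇T) = sup over all strategies π of Pr^{π}(◇T). -/

import Mathlib

open scoped BigOperators

/-- A Markov decision process with finite state space `S`, finite action space `A`, a
partial probabilistic transition function and an initial state. -/
structure MDP (S A : Type) [Fintype S] [Fintype A] where
  P : S → A → Option (S → ℝ)
  P_nonneg : ∀ s a d, P s a = some d → ∀ s', 0 ≤ d s'
  P_sum_one : ∀ s a d, P s a = some d → ∑ s', d s' = 1
  s0 : S

variable {S A : Type} [Fintype S] [Fintype A]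

/-- A (history-dependent, randomized) strategy: given the past states and the current
state, a probability distribution over actions, supported on defined actions. -/
structure MDP.Strategy (M : MDP S A) where
  σ : List S → S → A → ℝ
  nonneg : ∀ h s a, 0 ≤ σ h s a
  sum_one : ∀ h s, ∑ a, σ h s a = 1
  supported : ∀ h s a, σ h s a ≠ 0 → (M.P s a).isSome

/-- Probability of reaching the target set `T` within `n` steps, starting from state `s`
with history `h`, under strategy `σ`. -/
noncomputable def MDP.reachVal (M : MDP S A) (T : Set S) [DecidablePred (· ∈ T)]
    (σ : List S → S → A → ℝ) : ℕ → List S → S → ℝ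
  | 0, _, s => if s ∈ T then 1 else 0
  | n + 1, h, s =>
    if s ∈ T then 1
    else ∑ a, σ h s a *
      ((M.P s a).elim 0 fun d => ∑ s', d s' * M.reachVal T σ n (h ++ [s]) s')

/-- Probability of the reachability event `◇T` under strategy `σ`, as the supremum of the
step-bounded reachability probabilities. -/
noncomputable def MDP.prReach (M : MDP S A) (T : Set S) [DecidablePred (· ∈ T)]
    (σ : List S → S → A → ℝ) : ℝ :=
  ⨆ n : ℕ, M.reachVal T σ n [] M.s0

/-- The (deterministic, memoryless) strategy induced by a choice function `π : S → A`. -/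
noncomputable def MDP.pureMemoryless (M : MDP S A) [DecidableEq A] (π : S → A) :
    List S → S → A → ℝ :=
  fun _ s a => if a = π s then 1 else 0

namespace MDPAux

open Filter Topology Finset

noncomputable section
open Classical

variable (M : MDP S A) (T : Set S) [DecidablePred (· ∈ T)]

/-- Action value of `a` at `s` with continuation value `v`. -/
def QQ (s : S) (a : A) (v : S → ℝ) : ℝ :=
  (M.P s a).elim 0 fun d => ∑ s', d s' * v s'

/-- Defined actions at `s`. -/
def Dfin (s : S) : Finset A := Finset.univ.filter fun a => (M.P s a).isSome

lemma mem_Dfin {s : S} {a : A} : a ∈ Dfin M s ↔ (M.P s a).isSome := by simp [Dfin]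

lemma Dfin_nonempty (hA : ∀ s, ∃ a, (M.P s a).isSome) (s : S) : (Dfin M s).Nonempty := by
  obtain ⟨a, ha⟩ := hA s; exact ⟨a, (mem_Dfin M).2 ha⟩

lemma QQ_none {s a} (h : M.P s a = none) (v : S → ℝ) : QQ M s a v = 0 := by simp [QQ, h]

lemma QQ_some {s a d} (h : M.P s a = some d) (v : S → ℝ) :
    QQ M s a v = ∑ s', d s' * v s' := by simp [QQ, h]

lemma QQ_nonneg {s a} {v : S → ℝ} (hv : ∀ s', 0 ≤ v s') : 0 ≤ QQ M s a v := by
  rcases h : M.P s a with _ | d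
  · simp [QQ_none M h]
  · rw [QQ_some M h]
    exact Finset.sum_nonneg fun s' _ => mul_nonneg (M.P_nonneg s a d h s') (hv s')

lemma QQ_mono {s a} {v w : S → ℝ} (hvw : ∀ s', v s' ≤ w s') : QQ M s a v ≤ QQ M s a w := by
  rcases h : M.P s a with _ | d
  · simp [QQ_none M h]
  · rw [QQ_some M h, QQ_some M h]
    exact Finset.sum_le_sum fun s' _ =>
      mul_le_mul_of_nonneg_left (hvw s') (M.P_nonneg s a d h s')

lemma QQ_le_const {s a} {v : S → ℝ} {c : ℝ} (hc : 0 ≤ c) (hv : ∀ s', v s' ≤ c) :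
    QQ M s a v ≤ c := by
  rcases h : M.P s a with _ | d
  · simpa [QQ_none M h] using hc
  · rw [QQ_some M h]
    calc ∑ s', d s' * v s' ≤ ∑ s', d s' * c :=
          Finset.sum_le_sum fun s' _ =>
            mul_le_mul_of_nonneg_left (hv s') (M.P_nonneg s a d h s')
      _ = c := by rw [← Finset.sum_mul, M.P_sum_one s a d h, one_mul]

lemma QQ_tendsto {s a} {v : ℕ → S → ℝ} {w : S → ℝ}
    (hv : ∀ s', Tendsto (fun n => v n s') atTop (𝓝 (w s'))) :
    Tendsto (fun n => QQ M s a (v n)) atTop (𝓝 (QQ M s a w)) := by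
  rcases h : M.P s a with _ | d
  · simp only [QQ_none M h]; exact tendsto_const_nhds
  · simp only [QQ_some M h]
    exact tendsto_finset_sum _ fun s' _ => (hv s').const_mul (d s')

/-- Optimal value iteration. -/
def U : ℕ → S → ℝ
  | 0, s => if s ∈ T then 1 else 0
  | n + 1, s =>
    if s ∈ T then 1
    else if h : (Dfin M s).Nonempty then (Dfin M s).sup' h fun a => QQ M s a (U n) else 0

lemma U_mem_T {s : S} (hs : s ∈ T) : ∀ n, U M T n s = 1 := by
  intro n; cases n <;> simp [U, hs]

lemma U_succ (hA : ∀ s, ∃ a, (M.P s a).isSome) {s : S} (hs : s ∉ T) (n : ℕ) :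
    U M T (n + 1) s = (Dfin M s).sup' (Dfin_nonempty M hA s) fun a => QQ M s a (U M T n) := by
  rw [U, if_neg hs, dif_pos (Dfin_nonempty M hA s)]

lemma U_nonneg : ∀ n s, 0 ≤ U M T n s := by
  intro n
  induction n with
  | zero => intro s; simp [U]; split <;> norm_num
  | succ n ih =>
    intro s
    rw [U]
    split
    · norm_num
    · split
      · rename_i hne
        obtain ⟨a, ha⟩ := hne
        exact le_trans (QQ_nonneg M ih) (Finset.le_sup' (fun a => QQ M s a (U M T n)) ha)
      · exact le_refl 0

lemma U_le_one : ∀ n s, U M T n s ≤ 1 := by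
  intro n
  induction n with
  | zero => intro s; simp [U]; split <;> norm_num
  | succ n ih =>
    intro s
    rw [U]
    split
    · exact le_refl 1
    · split
      · exact Finset.sup'_le _ _ fun a _ => QQ_le_const M zero_le_one ih
      · norm_num

lemma U_mono_succ : ∀ n s, U M T n s ≤ U M T (n + 1) s := by
  intro n
  induction n with
  | zero =>
    intro s
    by_cases hs : s ∈ T
    · rw [U_mem_T M T hs, U_mem_T M T hs]
    · have : U M T 0 s = 0 := by simp [U, hs]
      rw [this]; exact U_nonneg M T 1 s
  | succ n ih =>
    intro s
    by_cases hs : s ∈ T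
    · rw [U_mem_T M T hs, U_mem_T M T hs]
    · rw [U, U, if_neg hs, if_neg hs]
      split
      · rename_i hne
        exact Finset.sup'_le _ _ fun a ha =>
          le_trans (QQ_mono M ih) (Finset.le_sup' (fun a => QQ M s a (U M T (n+1))) ha)
      · exact le_refl 0

lemma U_mono (s : S) : Monotone fun n => U M T n s :=
  monotone_nat_of_le_succ fun n => U_mono_succ M T n s

lemma bddAbove_U (s : S) : BddAbove (Set.range fun n => U M T n s) :=
  ⟨1, by rintro _ ⟨n, rfl⟩; exact U_le_one M T n s⟩

/-- Optimal value. -/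
def V (s : S) : ℝ := ⨆ n, U M T n s

lemma U_le_V (n : ℕ) (s : S) : U M T n s ≤ V M T s :=
  le_ciSup (bddAbove_U M T s) n

lemma V_nonneg (s : S) : 0 ≤ V M T s := le_trans (U_nonneg M T 0 s) (U_le_V M T 0 s)

lemma V_le_one (s : S) : V M T s ≤ 1 := ciSup_le fun n => U_le_one M T n s

lemma tendsto_U (s : S) : Tendsto (fun n => U M T n s) atTop (𝓝 (V M T s)) :=
  tendsto_atTop_ciSup (U_mono M T s) (bddAbove_U M T s)

lemma V_mem_T {s : S} (hs : s ∈ T) : V M T s = 1 := by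
  have : ∀ n, U M T n s = 1 := U_mem_T M T hs
  simp only [V, this, ciSup_const]

lemma tendsto_sup' {ι : Type} {f : ι → ℕ → ℝ} {g : ι → ℝ} :
    ∀ (s : Finset ι) (hs : s.Nonempty), (∀ i ∈ s, Tendsto (f i) atTop (𝓝 (g i))) →
    Tendsto (fun n => s.sup' hs fun i => f i n) atTop (𝓝 (s.sup' hs g)) := by
  intro s
  induction s using Finset.cons_induction with
  | empty => intro hs; exact absurd hs (by simp)
  | cons a s h ihs =>
    intro hs hf
    rcases s.eq_empty_or_nonempty with rfl | hs'
    · simpa using hf a (by simp)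
    · simp only [Finset.sup'_cons hs']
      exact (hf a (by simp)).max (ihs hs' fun i hi => hf i (Finset.mem_cons_of_mem hi))

lemma V_fixed (hA : ∀ s, ∃ a, (M.P s a).isSome) {s : S} (hs : s ∉ T) :
    V M T s = (Dfin M s).sup' (Dfin_nonempty M hA s) fun a => QQ M s a (V M T) := by
  have h1 : Tendsto (fun n => U M T (n + 1) s) atTop (𝓝 (V M T s)) :=
    (tendsto_add_atTop_iff_nat (f := fun n => U M T n s) 1).2 (tendsto_U M T s)
  have h2 : Tendsto (fun n => U M T (n + 1) s) atTop
      (𝓝 ((Dfin M s).sup' (Dfin_nonempty M hA s) fun a => QQ M s a (V M T))) := by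
    simp only [U_succ M T hA hs]
    exact tendsto_sup' (Dfin M s) (Dfin_nonempty M hA s)
      fun a _ => QQ_tendsto M fun s' => tendsto_U M T s'
  exact tendsto_nhds_unique h1 h2

lemma QQ_le_V (hA : ∀ s, ∃ a, (M.P s a).isSome) {s : S} (hs : s ∉ T) {a : A}
    (ha : a ∈ Dfin M s) : QQ M s a (V M T) ≤ V M T s := by
  rw [V_fixed M T hA hs]; exact Finset.le_sup' (fun a => QQ M s a (V M T)) ha

/-- Optimal actions at `s`. -/
def Ofin (s : S) : Finset A := (Dfin M s).filter fun a => QQ M s a (V M T) = V M T s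

/-- Attractor to `T` through optimal actions. -/
def Ck : ℕ → Finset S
  | 0 => Finset.univ.filter fun s => s ∈ T
  | k + 1 => Ck k ∪ Finset.univ.filter fun s =>
      ∃ a ∈ Ofin M T s, ∃ d, M.P s a = some d ∧ ∃ s', s' ∈ Ck k ∧ 0 < d s'

lemma mem_Ck0_iff {s : S} : s ∈ Ck M T 0 ↔ s ∈ T := by simp [Ck]

lemma mem_Ck_succ_of {s : S} {k : ℕ} {a : A} {d : S → ℝ} {s' : S}
    (ha : a ∈ Ofin M T s) (hd : M.P s a = some d) (hs' : s' ∈ Ck M T k) (hds' : 0 < d s') :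
    s ∈ Ck M T (k + 1) := by
  rw [Ck]
  exact Finset.mem_union.2 (Or.inr (Finset.mem_filter.2
    ⟨Finset.mem_univ s, a, ha, d, hd, s', hs', hds'⟩))

def rank (s : S) : ℕ := if h : ∃ k, s ∈ Ck M T k then Nat.find h else 0

lemma rank_le {s : S} {k : ℕ} (h : s ∈ Ck M T k) : rank M T s ≤ k := by
  rw [rank, dif_pos ⟨k, h⟩]; exact Nat.find_le h

lemma mem_Ck_rank {s : S} (h : ∃ k, s ∈ Ck M T k) : s ∈ Ck M T (rank M T s) := by
  rw [rank, dif_pos h]; exact Nat.find_spec h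

lemma not_mem_Ck_of_lt {s : S} {k : ℕ} (h : ∃ k, s ∈ Ck M T k) (hk : k < rank M T s) :
    s ∉ Ck M T k := by
  rw [rank, dif_pos h] at hk; exact Nat.find_min h hk

/-- If a convex combination of values bounded by `c` equals `c`, then each value with
positive weight equals `c`. -/
lemma forcing {d f : S → ℝ} {c : ℝ} (hd : ∀ t, 0 ≤ d t) (hsum : ∑ t, d t = 1)
    (hf : ∀ t, 0 < d t → f t ≤ c) (heq : ∑ t, d t * f t = c) {t : S} (hdt : 0 < d t) :
    f t = c := by
  have hterm : ∀ t' ∈ Finset.univ, 0 ≤ d t' * (c - f t') := by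
    intro t' _
    rcases (hd t').eq_or_lt with h0 | h0
    · rw [← h0, zero_mul]
    · exact mul_nonneg (le_of_lt h0) (sub_nonneg.2 (hf t' h0))
  have h0 : ∑ t', d t' * (c - f t') = 0 := by
    simp only [mul_sub]
    rw [Finset.sum_sub_distrib, ← Finset.sum_mul, hsum, one_mul, heq, sub_self]
  have := (Finset.sum_eq_zero_iff_of_nonneg hterm).1 h0 t (Finset.mem_univ t)
  rcases mul_eq_zero.1 this with h | h
  · exact absurd h (ne_of_gt hdt)
  · linarith

/-- Every state with positive value can reach `T` through optimal actions. -/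
lemma mem_C (hA : ∀ s, ∃ a, (M.P s a).isSome) (s : S) (hV : 0 < V M T s) :
    ∃ k, s ∈ Ck M T k := by
  by_contra hs
  set Z : Finset S := Finset.univ.filter (fun t => 0 < V M T t ∧ ¬∃ k, t ∈ Ck M T k)
    with hZdef
  have hZne : Z.Nonempty := ⟨s, Finset.mem_filter.2 ⟨Finset.mem_univ s, hV, hs⟩⟩
  obtain ⟨s₀, hs₀Z, hx⟩ := Finset.exists_mem_eq_sup' hZne (V M T)
  set x := Z.sup' hZne (V M T) with hxdef
  have hxpos : 0 < x := by rw [hx]; exact ((Finset.mem_filter.1 hs₀Z).2).1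
  set F : Finset S := Z.filter (fun t => V M T t = x) with hFdef
  have hs₀F : s₀ ∈ F := Finset.mem_filter.2 ⟨hs₀Z, hx.symm⟩
  have hFfacts : ∀ t ∈ F, 0 < V M T t ∧ (¬∃ k, t ∈ Ck M T k) ∧ V M T t = x ∧ t ∉ T := by
    intro t ht
    obtain ⟨htZ, htx⟩ := Finset.mem_filter.1 ht
    obtain ⟨-, hpos, hnC⟩ := Finset.mem_filter.1 htZ
    exact ⟨hpos, hnC, htx, fun hT => hnC ⟨0, (mem_Ck0_iff M T).2 hT⟩⟩
  have hsucc : ∀ t ∈ F, ∀ a ∈ Ofin M T t, ∀ d, M.P t a = some d →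
      ∀ s', 0 < d s' → s' ∈ F := by
    intro t ht a ha d hd s' hds'
    obtain ⟨hpos, hnC, htx, hnT⟩ := hFfacts t ht
    have hnotC : ∀ u, 0 < d u → ¬∃ k, u ∈ Ck M T k := by
      rintro u hu ⟨k, hk⟩
      exact hnC ⟨k + 1, mem_Ck_succ_of M T ha hd hk hu⟩
    have hub : ∀ u, 0 < d u → V M T u ≤ x := by
      intro u hu
      by_cases hVu : 0 < V M T u
      · exact Finset.le_sup' (V M T)
          (Finset.mem_filter.2 ⟨Finset.mem_univ u, hVu, hnotC u hu⟩)
      · have h1 := V_nonneg M T u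
        have : V M T u = 0 := le_antisymm (not_lt.1 hVu) h1
        rw [this]; exact le_of_lt hxpos
    have hQ : ∑ u, d u * V M T u = x := by
      rw [← QQ_some M hd]
      rw [(Finset.mem_filter.1 ha).2, htx]
    have hVs' : V M T s' = x :=
      forcing (M.P_nonneg t a d hd) (M.P_sum_one t a d hd) hub hQ hds'
    exact Finset.mem_filter.2
      ⟨Finset.mem_filter.2 ⟨Finset.mem_univ s', hVs' ▸ hxpos, hnotC s' hds'⟩, hVs'⟩
  set pairs : Finset (S × A) :=
    (F ×ˢ (Finset.univ : Finset A)).filter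
      (fun p => p.2 ∈ Dfin M p.1 ∧ p.2 ∉ Ofin M T p.1) with hpairs
  set βs : Finset ℝ := insert (0 : ℝ) (pairs.image fun p => QQ M p.1 p.2 (V M T)) with hβs
  have hβne : βs.Nonempty := ⟨0, Finset.mem_insert_self _ _⟩
  set β := βs.max' hβne with hβdef
  have hβ0 : (0 : ℝ) ≤ β := Finset.le_max' _ _ (Finset.mem_insert_self _ _)
  have hβmem : ∀ t ∈ F, ∀ a, a ∈ Dfin M t → a ∉ Ofin M T t →
      QQ M t a (V M T) ≤ β := by
    intro t ht a h1 h2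
    apply Finset.le_max'
    apply Finset.mem_insert_of_mem
    refine Finset.mem_image.2 ⟨(t, a), ?_, rfl⟩
    exact Finset.mem_filter.2 ⟨Finset.mem_product.2 ⟨ht, Finset.mem_univ a⟩, h1, h2⟩
  have hβx : β < x := by
    rw [hβdef]
    apply (Finset.max'_lt_iff _ hβne).2
    intro y hy
    rcases Finset.mem_insert.1 hy with rfl | hy
    · exact hxpos
    · obtain ⟨p, hp, rfl⟩ := Finset.mem_image.1 hy
      obtain ⟨hprod, hD, hnO⟩ := Finset.mem_filter.1 hp
      have htF : p.1 ∈ F := (Finset.mem_product.1 hprod).1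
      obtain ⟨-, -, htx, hnT⟩ := hFfacts _ htF
      have hle : QQ M p.1 p.2 (V M T) ≤ V M T p.1 := QQ_le_V M T hA hnT hD
      have hne' : QQ M p.1 p.2 (V M T) ≠ V M T p.1 := fun he =>
        hnO (Finset.mem_filter.2 ⟨hD, he⟩)
      rw [← htx]
      exact lt_of_le_of_ne hle hne'
  have hUβ : ∀ n, ∀ t ∈ F, U M T n t ≤ β := by
    intro n
    induction n with
    | zero =>
      intro t ht
      obtain ⟨-, -, -, hnT⟩ := hFfacts t ht
      have : U M T 0 t = 0 := by simp [U, hnT]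
      rw [this]; exact hβ0
    | succ n ih =>
      intro t ht
      obtain ⟨hpos, hnC, htx, hnT⟩ := hFfacts t ht
      rw [U_succ M T hA hnT]
      apply Finset.sup'_le
      intro a haD
      by_cases haO : a ∈ Ofin M T t
      · obtain ⟨d, hd⟩ := Option.isSome_iff_exists.1 ((mem_Dfin M).1 haD)
        rw [QQ_some M hd]
        calc ∑ s', d s' * U M T n s' ≤ ∑ s', d s' * β := by
              apply Finset.sum_le_sum
              intro s' _
              rcases (M.P_nonneg t a d hd s').eq_or_lt with h0 | h0
              · rw [← h0, zero_mul, zero_mul]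
              · exact mul_le_mul_of_nonneg_left
                  (ih s' (hsucc t ht a haO d hd s' h0)) (le_of_lt h0)
          _ = β := by rw [← Finset.sum_mul, M.P_sum_one t a d hd, one_mul]
      · exact le_trans (QQ_mono M fun s' => U_le_V M T n s') (hβmem t ht a haD haO)
  have hV0β : V M T s₀ ≤ β := ciSup_le fun n => hUβ n s₀ hs₀F
  rw [← hx] at hV0β
  exact absurd (lt_of_le_of_lt hV0β hβx) (lt_irrefl x)

/-- Choice of a good action at every state. -/
lemma pick (hA : ∀ s, ∃ a, (M.P s a).isSome) (s : S) :
    ∃ a, a ∈ Dfin M s ∧ (0 < V M T s → s ∉ T → a ∈ Ofin M T s ∧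
      ∃ d, M.P s a = some d ∧ ∃ s', s' ∈ Ck M T (rank M T s - 1) ∧ 0 < d s') := by
  by_cases h : 0 < V M T s ∧ s ∉ T
  · obtain ⟨hV, hT⟩ := h
    have hC := mem_C M T hA s hV
    have hmem := mem_Ck_rank M T hC
    have hr0 : rank M T s ≠ 0 := by
      intro h0; rw [h0] at hmem; exact hT ((mem_Ck0_iff M T).1 hmem)
    obtain ⟨m, hm⟩ := Nat.exists_eq_succ_of_ne_zero hr0
    rw [hm] at hmem
    have hnot : s ∉ Ck M T m := not_mem_Ck_of_lt M T hC (by omega)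
    rw [Ck] at hmem
    rcases Finset.mem_union.1 hmem with h1 | h1
    · exact absurd h1 hnot
    · obtain ⟨-, a, ha, d, hd, s', hs', hds'⟩ := Finset.mem_filter.1 h1
      have haD : a ∈ Dfin M s := (Finset.mem_filter.1 ha).1
      refine ⟨a, haD, fun _ _ => ⟨ha, d, hd, s', ?_, hds'⟩⟩
      have : rank M T s - 1 = m := by omega
      rw [this]; exact hs'
  · obtain ⟨a, ha⟩ := hA s
    exact ⟨a, (mem_Dfin M).2 ha, fun h1 h2 => absurd ⟨h1, h2⟩ h⟩

/-- The optimal pure memoryless strategy. -/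
def pistar (hA : ∀ s, ∃ a, (M.P s a).isSome) : S → A := fun s => (pick M T hA s).choose

lemma pistar_D (hA : ∀ s, ∃ a, (M.P s a).isSome) (s : S) :
    pistar M T hA s ∈ Dfin M s := (pick M T hA s).choose_spec.1

lemma pistar_opt (hA : ∀ s, ∃ a, (M.P s a).isSome) {s : S} (hV : 0 < V M T s)
    (hT : s ∉ T) : pistar M T hA s ∈ Ofin M T s ∧
      ∃ d, M.P s (pistar M T hA s) = some d ∧
        ∃ s', s' ∈ Ck M T (rank M T s - 1) ∧ 0 < d s' :=
  (pick M T hA s).choose_spec.2 hV hT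

/-- Value iteration for the fixed memoryless strategy `π`. -/
def RR (π : S → A) : ℕ → S → ℝ
  | 0, s => if s ∈ T then 1 else 0
  | n + 1, s => if s ∈ T then 1 else QQ M s (π s) (RR π n)

lemma RR_mem_T {π : S → A} {s : S} (hs : s ∈ T) : ∀ n, RR M T π n s = 1 := by
  intro n; cases n <;> simp [RR, hs]

lemma RR_nonneg (π : S → A) : ∀ n s, 0 ≤ RR M T π n s := by
  intro n
  induction n with
  | zero => intro s; simp [RR]; split <;> norm_num
  | succ n ih =>
    intro s
    rw [RR]
    split
    · norm_num
    · exact QQ_nonneg M ih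

lemma RR_le_one (π : S → A) : ∀ n s, RR M T π n s ≤ 1 := by
  intro n
  induction n with
  | zero => intro s; simp [RR]; split <;> norm_num
  | succ n ih =>
    intro s
    rw [RR]
    split
    · exact le_refl 1
    · exact QQ_le_const M zero_le_one ih

lemma RR_mono_succ (π : S → A) : ∀ n s, RR M T π n s ≤ RR M T π (n + 1) s := by
  intro n
  induction n with
  | zero =>
    intro s
    by_cases hs : s ∈ T
    · rw [RR_mem_T M T hs, RR_mem_T M T hs]
    · have : RR M T π 0 s = 0 := by simp [RR, hs]
      rw [this]; exact RR_nonneg M T π 1 s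
  | succ n ih =>
    intro s
    by_cases hs : s ∈ T
    · rw [RR_mem_T M T hs, RR_mem_T M T hs]
    · rw [RR, RR, if_neg hs, if_neg hs]
      exact QQ_mono M ih

lemma RR_mono (π : S → A) (s : S) : Monotone fun n => RR M T π n s :=
  monotone_nat_of_le_succ fun n => RR_mono_succ M T π n s

lemma bddAbove_RR (π : S → A) (s : S) : BddAbove (Set.range fun n => RR M T π n s) :=
  ⟨1, by rintro _ ⟨n, rfl⟩; exact RR_le_one M T π n s⟩

/-- Value of the memoryless strategy `π`. -/
def W (π : S → A) (s : S) : ℝ := ⨆ n, RR M T π n s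

lemma tendsto_RR (π : S → A) (s : S) :
    Tendsto (fun n => RR M T π n s) atTop (𝓝 (W M T π s)) :=
  tendsto_atTop_ciSup (RR_mono M T π s) (bddAbove_RR M T π s)

lemma W_nonneg (π : S → A) (s : S) : 0 ≤ W M T π s :=
  le_trans (RR_nonneg M T π 0 s) (le_ciSup (bddAbove_RR M T π s) 0)

lemma W_mem_T (π : S → A) {s : S} (hs : s ∈ T) : W M T π s = 1 := by
  have : ∀ n, RR M T π n s = 1 := RR_mem_T M T hs
  simp only [W, this, ciSup_const]

lemma W_fixed (π : S → A) {s : S} (hs : s ∉ T) :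
    W M T π s = QQ M s (π s) (W M T π) := by
  have h1 : Tendsto (fun n => RR M T π (n + 1) s) atTop (𝓝 (W M T π s)) :=
    (tendsto_add_atTop_iff_nat 1).2 (tendsto_RR M T π s)
  have h2 : Tendsto (fun n => RR M T π (n + 1) s) atTop (𝓝 (QQ M s (π s) (W M T π))) := by
    have : ∀ n, RR M T π (n + 1) s = QQ M s (π s) (RR M T π n) := by
      intro n; rw [RR, if_neg hs]
    simp only [this]
    exact QQ_tendsto M fun s' => tendsto_RR M T π s'
  exact tendsto_nhds_unique h1 h2

/-- The key optimality lemma: the value of `pistar` dominates the optimal value. -/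
lemma V_le_W (hA : ∀ s, ∃ a, (M.P s a).isSome) (s : S) :
    V M T s ≤ W M T (pistar M T hA) s := by
  by_contra hlt
  push_neg at hlt
  have hSne : Nonempty S := ⟨s⟩
  set π := pistar M T hA with hπdef
  set δ : S → ℝ := fun t => V M T t - W M T π t with hδdef
  have huniv : (Finset.univ : Finset S).Nonempty := Finset.univ_nonempty
  set m := (Finset.univ : Finset S).sup' huniv δ with hmdef
  have hδle : ∀ t, δ t ≤ m := fun t => Finset.le_sup' δ (Finset.mem_univ t)
  have hmpos : 0 < m := lt_of_lt_of_le (sub_pos.2 hlt) (hδle s)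
  set Fm := Finset.univ.filter (fun t => δ t = m) with hFmdef
  have hFmne : Fm.Nonempty := by
    obtain ⟨t, -, ht⟩ := Finset.exists_mem_eq_sup' huniv δ
    exact ⟨t, Finset.mem_filter.2 ⟨Finset.mem_univ t, ht.symm⟩⟩
  obtain ⟨t0, ht0Fm, hmin⟩ := Finset.exists_min_image Fm (rank M T) hFmne
  have hδt : δ t0 = m := (Finset.mem_filter.1 ht0Fm).2
  have hWnn : 0 ≤ W M T π t0 := W_nonneg M T π t0
  have hVpos : 0 < V M T t0 := by
    have h1 : 0 < δ t0 := hδt ▸ hmpos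
    have h2 : δ t0 = V M T t0 - W M T π t0 := rfl
    linarith
  have hnT : t0 ∉ T := by
    intro hT
    have h1 : V M T t0 = 1 := V_mem_T M T hT
    have h2 : W M T π t0 = 1 := W_mem_T M T π hT
    have : δ t0 = 0 := by rw [hδdef]; simp [h1, h2]
    rw [this] at hδt; exact absurd hδt.symm (ne_of_gt hmpos)
  obtain ⟨haO, d, hd, s'', hs'', hds''⟩ := pistar_opt M T hA hVpos hnT
  have hQV : QQ M t0 (π t0) (V M T) = V M T t0 := (Finset.mem_filter.1 haO).2
  have hQW : QQ M t0 (π t0) (W M T π) = W M T π t0 := (W_fixed M T π hnT).symm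
  have hsum : ∑ u, d u * δ u = m := by
    have h1 : ∑ u, d u * V M T u = V M T t0 := by rw [← QQ_some M hd]; exact hQV
    have h2 : ∑ u, d u * W M T π u = W M T π t0 := by rw [← QQ_some M hd]; exact hQW
    calc ∑ u, d u * δ u = ∑ u, (d u * V M T u - d u * W M T π u) := by
          simp only [hδdef, mul_sub]
      _ = V M T t0 - W M T π t0 := by rw [Finset.sum_sub_distrib, h1, h2]
      _ = m := hδt
  have hδs'' : δ s'' = m :=
    forcing (M.P_nonneg t0 (π t0) d hd) (M.P_sum_one t0 (π t0) d hd)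
      (fun u _ => hδle u) hsum hds''
  have hs''Fm : s'' ∈ Fm := Finset.mem_filter.2 ⟨Finset.mem_univ _, hδs''⟩
  have h1 : rank M T t0 ≤ rank M T s'' := hmin s'' hs''Fm
  have h2 : rank M T s'' ≤ rank M T t0 - 1 := rank_le M T hs''
  have h3 : rank M T t0 ≠ 0 := by
    intro h0
    have := mem_Ck_rank M T (mem_C M T hA t0 hVpos)
    rw [h0] at this
    exact hnT ((mem_Ck0_iff M T).1 this)
  omega

lemma reachVal_pure [DecidableEq A] (π : S → A) :
    ∀ n h s, M.reachVal T (M.pureMemoryless π) n h s = RR M T π n s := by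
  intro n
  induction n with
  | zero => intro h s; simp [MDP.reachVal, RR]
  | succ n ih =>
    intro h s
    by_cases hs : s ∈ T
    · simp [MDP.reachVal, RR, hs]
    · rw [MDP.reachVal, if_neg hs, RR, if_neg hs]
      have hE : ∀ a : A,
          ((M.P s a).elim 0 fun dd =>
            ∑ s', dd s' * M.reachVal T (M.pureMemoryless π) n (h ++ [s]) s')
          = QQ M s a (RR M T π n) := by
        intro a
        rcases hP : M.P s a with _ | dd
        · simp [QQ_none M hP]
        · rw [QQ_some M hP]
          simp only [Option.elim]
          exact Finset.sum_congr rfl fun s' _ => by rw [ih]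
      simp only [hE, MDP.pureMemoryless, ite_mul, one_mul, zero_mul]
      rw [Finset.sum_ite_eq' Finset.univ (π s) (fun a => QQ M s a (RR M T π n))]
      simp

lemma reachVal_le_U (hA : ∀ s, ∃ a, (M.P s a).isSome) (σ : M.Strategy) :
    ∀ n h s, M.reachVal T σ.σ n h s ≤ U M T n s := by
  intro n
  induction n with
  | zero => intro h s; simp [MDP.reachVal, U]
  | succ n ih =>
    intro h s
    by_cases hs : s ∈ T
    · rw [U_mem_T M T hs]
      simp [MDP.reachVal, hs]
    · rw [MDP.reachVal, if_neg hs, U_succ M T hA hs]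
      set K := (Dfin M s).sup' (Dfin_nonempty M hA s) fun a => QQ M s a (U M T n) with hK
      have hK0 : 0 ≤ K := by
        obtain ⟨a, ha⟩ := Dfin_nonempty M hA s
        exact le_trans (QQ_nonneg M (U_nonneg M T n))
          ((Finset.le_sup' (fun a => QQ M s a (U M T n)) ha).trans_eq hK.symm)
      calc ∑ a, σ.σ h s a *
            ((M.P s a).elim 0 fun dd => ∑ s', dd s' * M.reachVal T σ.σ n (h ++ [s]) s')
          ≤ ∑ a, σ.σ h s a * K := by
            apply Finset.sum_le_sum
            intro a _
            rcases (σ.nonneg h s a).eq_or_lt with h0 | h0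
            · rw [← h0, zero_mul, zero_mul]
            · have haD : a ∈ Dfin M s :=
                (mem_Dfin M).2 (σ.supported h s a (ne_of_gt h0))
              have hQ : QQ M s a (fun s' => M.reachVal T σ.σ n (h ++ [s]) s')
                  ≤ QQ M s a (U M T n) := QQ_mono M fun s' => ih (h ++ [s]) s'
              have h2 : QQ M s a (U M T n) ≤ K :=
                (Finset.le_sup' (fun a => QQ M s a (U M T n)) haD).trans_eq hK.symm
              exact mul_le_mul_of_nonneg_left (le_trans hQ h2) (le_of_lt h0)
        _ = K := by rw [← Finset.sum_mul, σ.sum_one h s, one_mul]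

/-- The strategy induced by a pure memoryless choice function. -/
def pureStrat [DecidableEq A] (π : S → A) (hπ : ∀ s, (M.P s (π s)).isSome) : M.Strategy where
  σ := M.pureMemoryless π
  nonneg := by intro h s a; unfold MDP.pureMemoryless; split <;> norm_num
  sum_one := by
    intro h s
    unfold MDP.pureMemoryless
    rw [Finset.sum_ite_eq' Finset.univ (π s) (fun _ => (1 : ℝ))]
    simp
  supported := by
    intro h s a ha
    by_cases hap : a = π s
    · subst hap; exact hπ s
    · exfalso; apply ha; simp [MDP.pureMemoryless, hap]

lemma prReach_le_V (hA : ∀ s, ∃ a, (M.P s a).isSome) (σ : M.Strategy) :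
    M.prReach T σ.σ ≤ V M T M.s0 :=
  ciSup_le fun n => le_trans (reachVal_le_U M T hA σ n [] M.s0) (U_le_V M T n M.s0)

end

end MDPAux

/-- For every finite MDP and reachability objective `◇T`, there is a pure memoryless
strategy `π*` with `Pr^{π*}(◇T) = sup_π Pr^{π}(◇T)`. -/
theorem stmt_10 [DecidableEq A] (M : MDP S A) (T : Set S) [DecidablePred (· ∈ T)]
    (hA : ∀ s, ∃ a, (M.P s a).isSome) :
    ∃ π : S → A, (∀ s, (M.P s (π s)).isSome) ∧
      M.prReach T (M.pureMemoryless π) = ⨆ σ : M.Strategy, M.prReach T σ.σ := by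
  classical
  set π := MDPAux.pistar M T hA with hπdef
  have hπD : ∀ s, (M.P s (π s)).isSome :=
    fun s => (MDPAux.mem_Dfin M).1 (MDPAux.pistar_D M T hA s)
  refine ⟨π, hπD, ?_⟩
  have hne : Nonempty M.Strategy := ⟨MDPAux.pureStrat M π hπD⟩
  have hbdd : BddAbove (Set.range fun σ : M.Strategy => M.prReach T σ.σ) := by
    refine ⟨1, ?_⟩
    rintro _ ⟨σ, rfl⟩
    exact ciSup_le fun n =>
      le_trans (MDPAux.reachVal_le_U M T hA σ n [] M.s0) (MDPAux.U_le_one M T n M.s0)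
  have hPW : M.prReach T (M.pureMemoryless π) = MDPAux.W M T π M.s0 := by
    unfold MDP.prReach MDPAux.W
    exact iSup_congr fun n => by rw [MDPAux.reachVal_pure M T π n [] M.s0]
  apply le_antisymm
  · have h1 : M.prReach T (MDPAux.pureStrat M π hπD).σ ≤ ⨆ σ : M.Strategy, M.prReach T σ.σ :=
      le_ciSup hbdd (MDPAux.pureStrat M π hπD)
    exact h1
  · apply ciSup_le
    intro σ
    calc M.prReach T σ.σ ≤ MDPAux.V M T M.s0 := MDPAux.prReach_le_V M T hA σ
      _ ≤ MDPAux.W M T π M.s0 := MDPAux.V_le_W M T hA M.s0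
      _ = M.prReach T (M.pureMemoryless π) := hPW.symm
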